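/- arXiv:1310.3764 — 4 statements merged into one kernel-verified Lean document; each statement's English description precedes it below -/
import Mathlib

section
/- Let W be a Jacobi operator on ℓ²(ℤ) with a(n) = −1 and b(n) = 0 for |n| > n_max, let λ₁ < −2 be its lowest eigenvalue with strictly positive eigenfunction φ (φ(n) > 0 for all n, Wφ = λ₁φ), and define the bounded operator D on ℓ²(ℤ) by (Du)(n) = −√(−a(n)φ(n)/φ(n+1)) u(n+1) + √(−a(n)φ(n+1)/φ(n)) u(n). Then D*D = W − λ₁, and DD* = W₁ − λ₁ where W₁ is the Jacobi operator with off-diagonal sequence a₁(n) = −√(a(n)a(n+1)φ(n)φ(n+2))/φ(n+1) and potential b₁(n) = −a(n)(φ(n)/φ(n+1) + φ(n+1)/φ(n)) + λ₁. Moreover 0 is not an eigenvalue of DD*, so the eigenvalues of W₁ outside [−2,2] are precisely the eigenvalues of W outside [−2,2] other than λ₁. -/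
open Filter

/-- `lam` is an eigenvalue of the Jacobi operator `W` on `ℓ²(ℤ)` with off-diagonal
sequence `a` and potential `b`. -/
def IsJacobiEigenvalue (a b : ℤ → ℝ) (lam : ℝ) : Prop :=
  ∃ u : ℤ → ℝ, Memℓp u 2 ∧ u ≠ 0 ∧
    ∀ n : ℤ, a (n - 1) * u (n - 1) + a n * u (n + 1) + b n * u n = lam * u n

/-- The commutation operator `D`:
`(Du)(n) = −√(−a(n)φ(n)/φ(n+1)) u(n+1) + √(−a(n)φ(n+1)/φ(n)) u(n)`. -/
noncomputable def Dop (a φ : ℤ → ℝ) (u : ℤ → ℝ) : ℤ → ℝ := fun n =>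
  -Real.sqrt (-a n * φ n / φ (n + 1)) * u (n + 1)
    + Real.sqrt (-a n * φ (n + 1) / φ n) * u n

/-- The adjoint operator `D*`:
`(D*u)(n) = −√(−a(n−1)φ(n−1)/φ(n)) u(n−1) + √(−a(n)φ(n+1)/φ(n)) u(n)`. -/
noncomputable def Dstarop (a φ : ℤ → ℝ) (u : ℤ → ℝ) : ℤ → ℝ := fun n =>
  -Real.sqrt (-a (n - 1) * φ (n - 1) / φ n) * u (n - 1)
    + Real.sqrt (-a n * φ (n + 1) / φ n) * u n

/-- The new off-diagonal sequence `a₁(n) = −√(a(n)a(n+1)φ(n)φ(n+2))/φ(n+1)`. -/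
noncomputable def a1seq (a φ : ℤ → ℝ) : ℤ → ℝ := fun n =>
  -Real.sqrt (a n * a (n + 1) * φ n * φ (n + 2)) / φ (n + 1)

/-- The new potential `b₁(n) = −a(n)(φ(n)/φ(n+1) + φ(n+1)/φ(n)) + λ₁`. -/
noncomputable def b1seq (a φ : ℤ → ℝ) (lam1 : ℝ) : ℤ → ℝ := fun n =>
  -a n * (φ n / φ (n + 1) + φ (n + 1) / φ n) + lam1

section JacobiAux

/-- Membership in `ℓ²` is equivalent to summability of squares. -/
lemma jac_memtwo (u : ℤ → ℝ) : Memℓp u 2 ↔ Summable (fun n => u n ^ 2) := by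
  have hnorm : (fun n : ℤ => ‖u n‖ ^ (2 : ENNReal).toReal) = fun n => u n ^ 2 := by
    funext n
    rw [show ((2 : ENNReal).toReal) = ((2 : ℕ) : ℝ) by norm_num, Real.rpow_natCast,
      Real.norm_eq_abs, sq_abs]
  rw [memℓp_gen_iff (by norm_num), hnorm]

lemma jac_shift1 (u : ℤ → ℝ) (h : Summable fun n => u n ^ 2) :
    Summable fun n => u (n + 1) ^ 2 :=
  h.comp_injective (fun x y hxy => by omega)

lemma jac_shiftm1 (u : ℤ → ℝ) (h : Summable fun n => u n ^ 2) :
    Summable fun n => u (n - 1) ^ 2 :=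
  h.comp_injective (fun x y hxy => by omega)

lemma jac_summable_mul {c u v : ℤ → ℝ} {C : ℝ} (hc0 : ∀ n, 0 ≤ c n) (hc : ∀ n, c n ≤ C)
    (hu : Summable fun n => u n ^ 2) (hv : Summable fun n => v n ^ 2) :
    Summable fun n => c n * u n * v n := by
  have hC0 : 0 ≤ C := le_trans (hc0 0) (hc 0)
  have hb : Summable fun n => C * (u n ^ 2 + v n ^ 2) := (hu.add hv).mul_left C
  rw [← summable_abs_iff]
  refine Summable.of_nonneg_of_le (fun n => abs_nonneg _) (fun n => ?_) hb
  have h1 : |c n * u n * v n| = c n * (|u n| * |v n|) := by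
    rw [abs_mul, abs_mul, abs_of_nonneg (hc0 n)]; ring
  rw [h1]
  have h3 : |u n| * |v n| ≤ u n ^ 2 + v n ^ 2 := by
    nlinarith [sq_nonneg (|u n| - |v n|), sq_abs (u n), sq_abs (v n),
      mul_nonneg (abs_nonneg (u n)) (abs_nonneg (v n))]
  calc c n * (|u n| * |v n|) ≤ C * (|u n| * |v n|) :=
        mul_le_mul_of_nonneg_right (hc n) (mul_nonneg (abs_nonneg _) (abs_nonneg _))
    _ ≤ C * (u n ^ 2 + v n ^ 2) := mul_le_mul_of_nonneg_left h3 hC0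

lemma jac_sq_bound (al be C x y : ℝ) (hα0 : 0 ≤ al) (hαC : al ≤ C) (hβ0 : 0 ≤ be)
    (hβC : be ≤ C) : (-al * x + be * y) ^ 2 ≤ 2 * C ^ 2 * x ^ 2 + 2 * C ^ 2 * y ^ 2 := by
  have h1 : al ^ 2 * x ^ 2 ≤ C ^ 2 * x ^ 2 :=
    mul_le_mul_of_nonneg_right (by nlinarith) (sq_nonneg x)
  have h2 : be ^ 2 * y ^ 2 ≤ C ^ 2 * y ^ 2 :=
    mul_le_mul_of_nonneg_right (by nlinarith) (sq_nonneg y)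
  nlinarith [sq_nonneg (al * x + be * y)]

lemma jac_sqrt_cross (x y z w t : ℝ) (hx : x < 0) (hy : y < 0) (hz : 0 < z) (hw : 0 < w)
    (ht : 0 < t) :
    Real.sqrt (-x * z / t) * Real.sqrt (-y * w / t) = Real.sqrt (x * y * z * w) / t := by
  have hxz : 0 ≤ -x * z / t := div_nonneg (mul_nonneg (by linarith) hz.le) ht.le
  have hprod : 0 ≤ x * y * z * w := by
    nlinarith [mul_pos (mul_pos (mul_pos (neg_pos.2 hx) (neg_pos.2 hy)) hz) hw]
  rw [← Real.sqrt_mul hxz, show -x * z / t * (-y * w / t) = x * y * z * w / t ^ 2 by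
    field_simp, Real.sqrt_div hprod, Real.sqrt_sq ht.le]

end JacobiAux

/-- Commutation method for the lowest eigenvalue of a Jacobi operator:
`D*D = W − λ₁`, `DD* = W₁ − λ₁`, `0` is not an eigenvalue of `DD*`, and the eigenvalues
of `W₁` outside `[−2, 2]` are precisely those of `W` other than `λ₁`. -/
theorem jacobi_commutation_step
    (a b : ℤ → ℝ) (nmax : ℕ)
    (ha_neg : ∀ n, a n < 0)
    (ha : ∀ n : ℤ, (nmax : ℤ) < |n| → a n = -1)
    (hb : ∀ n : ℤ, (nmax : ℤ) < |n| → b n = 0)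
    (lam1 : ℝ) (hlam1 : lam1 < -2)
    (φ : ℤ → ℝ) (hφ_pos : ∀ n, 0 < φ n) (hφ_mem : Memℓp φ 2)
    (hφ_eig : ∀ n : ℤ, a (n - 1) * φ (n - 1) + a n * φ (n + 1) + b n * φ n = lam1 * φ n)
    (h_lowest : ∀ μ : ℝ, IsJacobiEigenvalue a b μ → lam1 ≤ μ) :
    (∀ (u : ℤ → ℝ) (n : ℤ), Dstarop a φ (Dop a φ u) n
        = (a (n - 1) * u (n - 1) + a n * u (n + 1) + b n * u n) - lam1 * u n)
    ∧ (∀ (u : ℤ → ℝ) (n : ℤ), Dop a φ (Dstarop a φ u) n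
        = (a1seq a φ (n - 1) * u (n - 1) + a1seq a φ n * u (n + 1)
            + b1seq a φ lam1 n * u n) - lam1 * u n)
    ∧ (¬ ∃ ψ : ℤ → ℝ, Memℓp ψ 2 ∧ ψ ≠ 0 ∧ ∀ n : ℤ, Dop a φ (Dstarop a φ ψ) n = 0)
    ∧ (∀ lam : ℝ, lam ∉ Set.Icc (-2 : ℝ) 2 →
        (IsJacobiEigenvalue (a1seq a φ) (b1seq a φ lam1) lam ↔
          (IsJacobiEigenvalue a b lam ∧ lam ≠ lam1))) := by
  -- basic square-root algebra
  have harg1 : ∀ m : ℤ, 0 ≤ -a m * φ m / φ (m + 1) := fun m =>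
    div_nonneg (mul_nonneg (neg_nonneg.2 (ha_neg m).le) (hφ_pos m).le) (hφ_pos (m + 1)).le
  have harg2 : ∀ m : ℤ, 0 ≤ -a m * φ (m + 1) / φ m := fun m =>
    div_nonneg (mul_nonneg (neg_nonneg.2 (ha_neg m).le) (hφ_pos (m + 1)).le) (hφ_pos m).le
  have hAsq : ∀ m : ℤ, Real.sqrt (-a m * φ m / φ (m + 1)) * Real.sqrt (-a m * φ m / φ (m + 1))
      = -a m * φ m / φ (m + 1) := fun m => Real.mul_self_sqrt (harg1 m)
  have hBsq : ∀ m : ℤ, Real.sqrt (-a m * φ (m + 1) / φ m) * Real.sqrt (-a m * φ (m + 1) / φ m)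
      = -a m * φ (m + 1) / φ m := fun m => Real.mul_self_sqrt (harg2 m)
  have hAB : ∀ m : ℤ, Real.sqrt (-a m * φ m / φ (m + 1)) * Real.sqrt (-a m * φ (m + 1) / φ m)
      = -a m := by
    intro m
    rw [← Real.sqrt_mul (harg1 m),
      show -a m * φ m / φ (m + 1) * (-a m * φ (m + 1) / φ m) = (a m) ^ 2 by
        field_simp [(hφ_pos m).ne', (hφ_pos (m + 1)).ne'],
      Real.sqrt_sq_eq_abs, abs_of_neg (ha_neg m)]
  -- Part 1: D*D = W - lam1
  have hP1 : ∀ (u : ℤ → ℝ) (n : ℤ), Dstarop a φ (Dop a φ u) n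
      = (a (n - 1) * u (n - 1) + a n * u (n + 1) + b n * u n) - lam1 * u n := by
    intro u n
    have e1 : -a (n - 1) * φ (n - 1) / φ n + -a n * φ (n + 1) / φ n = b n - lam1 := by
      have h := hφ_eig n
      field_simp [(hφ_pos n).ne']
      linear_combination -h
    have h1 := hAsq (n - 1); rw [sub_add_cancel] at h1
    have h2 := hAB (n - 1); rw [sub_add_cancel] at h2
    simp only [Dop, Dstarop, sub_add_cancel]
    linear_combination u n * h1 + u n * hBsq n - u (n - 1) * h2 - u (n + 1) * hAB n + u n * e1
  -- Part 2: DD* = W₁ - lam1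
  have hP2 : ∀ (u : ℤ → ℝ) (n : ℤ), Dop a φ (Dstarop a φ u) n
      = (a1seq a φ (n - 1) * u (n - 1) + a1seq a φ n * u (n + 1)
          + b1seq a φ lam1 n * u n) - lam1 * u n := by
    intro u n
    have hX1 : Real.sqrt (-a (n - 1) * φ (n - 1) / φ n) * Real.sqrt (-a n * φ (n + 1) / φ n)
        = Real.sqrt (a (n - 1) * a n * φ (n - 1) * φ (n + 1)) / φ n :=
      jac_sqrt_cross (a (n - 1)) (a n) (φ (n - 1)) (φ (n + 1)) (φ n) (ha_neg _) (ha_neg _)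
        (hφ_pos _) (hφ_pos _) (hφ_pos _)
    have hX2 : Real.sqrt (-a n * φ n / φ (n + 1))
          * Real.sqrt (-a (n + 1) * φ (n + 2) / φ (n + 1))
        = Real.sqrt (a n * a (n + 1) * φ n * φ (n + 2)) / φ (n + 1) :=
      jac_sqrt_cross (a n) (a (n + 1)) (φ n) (φ (n + 2)) (φ (n + 1)) (ha_neg _) (ha_neg _)
        (hφ_pos _) (hφ_pos _) (hφ_pos _)
    simp only [Dop, Dstarop, a1seq, b1seq, sub_add_cancel, add_sub_cancel_right,
      show n - 1 + 2 = n + 1 by ring, show n + 1 + 1 = n + 2 by ring]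
    linear_combination u n * hAsq n + u n * hBsq n - u (n + 1) * hX2 - u (n - 1) * hX1
  -- uniform bound on the coefficients
  obtain ⟨C, hC1, haC, hup, hdown⟩ : ∃ C : ℝ, 1 ≤ C ∧ (∀ n, -a n ≤ C)
      ∧ (∀ n, φ (n + 1) ≤ C * φ n) ∧ (∀ n, φ n ≤ C * φ (n + 1)) := by
    set F : ℤ → ℝ := fun n =>
      max ((b n - lam1) / (-a n)) (max ((b (n + 1) - lam1) / (-a n)) (-a n)) with hF
    have hFbdd : ∃ C0 : ℝ, ∀ n, F n ≤ C0 := by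
      have hfin : ((F '' Set.Icc (-(nmax : ℤ) - 1) ((nmax : ℤ) + 1))
          ∪ {max (-lam1) (max (-lam1) 1)}).Finite :=
        ((Set.finite_Icc _ _).image F).union (Set.finite_singleton _)
      obtain ⟨C0, hC0⟩ := hfin.bddAbove
      refine ⟨C0, fun n => ?_⟩
      rcases le_or_gt (|n|) ((nmax : ℤ) + 1) with h | h
      · refine hC0 (Or.inl ⟨n, ?_, rfl⟩)
        rw [Set.mem_Icc]
        constructor <;> linarith [abs_le.1 h |>.1, abs_le.1 h |>.2]
      · have han : a n = -1 := ha n (by omega)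
        have hbn : b n = 0 := hb n (by omega)
        have habs : |n| ≤ |n + 1| + 1 := by
          calc |n| = |n + 1 + (-1)| := by ring_nf
            _ ≤ |n + 1| + |(-1 : ℤ)| := abs_add_le _ _
            _ = |n + 1| + 1 := by norm_num
        have hbn1 : b (n + 1) = 0 := hb (n + 1) (by linarith)
        have hFn : F n = max (-lam1) (max (-lam1) 1) := by
          rw [hF]; simp [han, hbn, hbn1]
        rw [hFn]
        exact hC0 (Or.inr rfl)
    obtain ⟨C0, hC0⟩ := hFbdd
    refine ⟨max C0 1, le_max_right _ _, fun n => ?_, fun n => ?_, fun n => ?_⟩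
    · exact le_trans (le_trans ((le_max_right _ _).trans (le_max_right _ _)) (hC0 n))
        (le_max_left _ _)
    · have h := hφ_eig n
      have hneg : a (n - 1) * φ (n - 1) < 0 := mul_neg_of_neg_of_pos (ha_neg (n - 1)) (hφ_pos _)
      have hpos : (0 : ℝ) < -a n := neg_pos.2 (ha_neg n)
      have step : φ (n + 1) ≤ ((b n - lam1) / (-a n)) * φ n := by
        rw [div_mul_eq_mul_div, le_div_iff₀ hpos]
        nlinarith
      calc φ (n + 1) ≤ ((b n - lam1) / (-a n)) * φ n := step
        _ ≤ max C0 1 * φ n := mul_le_mul_of_nonneg_right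
            (le_trans (le_trans (le_max_left _ _) (hC0 n)) (le_max_left _ _)) (hφ_pos n).le
    · have h := hφ_eig (n + 1)
      rw [add_sub_cancel_right] at h
      have hneg : a (n + 1) * φ (n + 1 + 1) < 0 :=
        mul_neg_of_neg_of_pos (ha_neg (n + 1)) (hφ_pos _)
      have hpos : (0 : ℝ) < -a n := neg_pos.2 (ha_neg n)
      have step : φ n ≤ ((b (n + 1) - lam1) / (-a n)) * φ (n + 1) := by
        rw [div_mul_eq_mul_div, le_div_iff₀ hpos]
        nlinarith
      calc φ n ≤ ((b (n + 1) - lam1) / (-a n)) * φ (n + 1) := step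
        _ ≤ max C0 1 * φ (n + 1) := mul_le_mul_of_nonneg_right
            (le_trans (le_trans ((le_max_left _ _).trans (le_max_right _ _)) (hC0 n))
              (le_max_left _ _)) (hφ_pos _).le
  have hC0 : (0 : ℝ) ≤ C := le_trans zero_le_one hC1
  -- bounds for the coefficients of D and D*
  have hαb : ∀ n : ℤ, Real.sqrt (-a n * φ n / φ (n + 1)) ≤ C := by
    intro n
    have harg : -a n * φ n / φ (n + 1) ≤ C * C := by
      rw [div_le_iff₀ (hφ_pos (n + 1))]
      nlinarith [mul_le_mul (haC n) (hdown n) (hφ_pos n).le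
        (le_trans (neg_pos.2 (ha_neg n)).le (haC n)), hφ_pos n, hφ_pos (n + 1)]
    calc Real.sqrt (-a n * φ n / φ (n + 1)) ≤ Real.sqrt (C * C) := Real.sqrt_le_sqrt harg
      _ = C := Real.sqrt_mul_self hC0
  have hβb : ∀ n : ℤ, Real.sqrt (-a n * φ (n + 1) / φ n) ≤ C := by
    intro n
    have harg : -a n * φ (n + 1) / φ n ≤ C * C := by
      rw [div_le_iff₀ (hφ_pos n)]
      nlinarith [mul_le_mul (haC n) (hup n) (hφ_pos (n + 1)).le
        (le_trans (neg_pos.2 (ha_neg n)).le (haC n)), hφ_pos n, hφ_pos (n + 1)]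
    calc Real.sqrt (-a n * φ (n + 1) / φ n) ≤ Real.sqrt (C * C) := Real.sqrt_le_sqrt harg
      _ = C := Real.sqrt_mul_self hC0
  have hαb' : ∀ n : ℤ, Real.sqrt (-a (n - 1) * φ (n - 1) / φ n) ≤ C := by
    intro n
    have := hαb (n - 1); rwa [sub_add_cancel] at this
  -- D and D* preserve ℓ²
  have hmemD : ∀ u : ℤ → ℝ, (Summable fun n => u n ^ 2) →
      Summable fun n => (Dop a φ u n) ^ 2 := by
    intro u hu
    have h2 : Summable fun n => 2 * C ^ 2 * u (n + 1) ^ 2 + 2 * C ^ 2 * u n ^ 2 :=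
      ((jac_shift1 u hu).mul_left _).add (hu.mul_left _)
    refine Summable.of_nonneg_of_le (fun n => sq_nonneg _) (fun n => ?_) h2
    simp only [Dop]
    exact jac_sq_bound _ _ C _ _ (Real.sqrt_nonneg _) (hαb n) (Real.sqrt_nonneg _) (hβb n)
  have hmemDs : ∀ u : ℤ → ℝ, (Summable fun n => u n ^ 2) →
      Summable fun n => (Dstarop a φ u n) ^ 2 := by
    intro u hu
    have h2 : Summable fun n => 2 * C ^ 2 * u (n - 1) ^ 2 + 2 * C ^ 2 * u n ^ 2 :=
      ((jac_shiftm1 u hu).mul_left _).add (hu.mul_left _)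
    refine Summable.of_nonneg_of_le (fun n => sq_nonneg _) (fun n => ?_) h2
    simp only [Dstarop]
    exact jac_sq_bound _ _ C _ _ (Real.sqrt_nonneg _) (hαb' n) (Real.sqrt_nonneg _) (hβb n)
  -- the adjoint identity ⟨Du, v⟩ = ⟨u, D*v⟩
  have hadj : ∀ u v : ℤ → ℝ, (Summable fun n => u n ^ 2) → (Summable fun n => v n ^ 2) →
      ∑' n, Dop a φ u n * v n = ∑' n, u n * Dstarop a φ v n := by
    intro u v hu hv
    have S1 : Summable fun n => Real.sqrt (-a n * φ n / φ (n + 1)) * u (n + 1) * v n :=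
      jac_summable_mul (fun n => Real.sqrt_nonneg _) hαb (jac_shift1 u hu) hv
    have S2 : Summable fun n => Real.sqrt (-a n * φ (n + 1) / φ n) * u n * v n :=
      jac_summable_mul (fun n => Real.sqrt_nonneg _) hβb hu hv
    have S3 : Summable fun n => Real.sqrt (-a (n - 1) * φ (n - 1) / φ n) * u n * v (n - 1) :=
      jac_summable_mul (fun n => Real.sqrt_nonneg _) hαb' hu (jac_shiftm1 v hv)
    have h13 : ∑' n, Real.sqrt (-a (n - 1) * φ (n - 1) / φ n) * u n * v (n - 1)
        = ∑' n, Real.sqrt (-a n * φ n / φ (n + 1)) * u (n + 1) * v n := by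
      calc ∑' n, Real.sqrt (-a (n - 1) * φ (n - 1) / φ n) * u n * v (n - 1)
          = ∑' n, (fun m => Real.sqrt (-a m * φ m / φ (m + 1)) * u (m + 1) * v m)
            ((Equiv.subRight (1 : ℤ)) n) := by
            refine tsum_congr fun n => ?_
            simp only [Equiv.subRight_apply, sub_add_cancel]
        _ = _ := by
          exact ((Equiv.subRight (1 : ℤ)).tsum_eq
            (fun m => Real.sqrt (-a m * φ m / φ (m + 1)) * u (m + 1) * v m))
    calc ∑' n, Dop a φ u n * v n
        = ∑' n, (Real.sqrt (-a n * φ (n + 1) / φ n) * u n * v n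
            - Real.sqrt (-a n * φ n / φ (n + 1)) * u (n + 1) * v n) :=
          tsum_congr fun n => by simp only [Dop]; ring
      _ = (∑' n, Real.sqrt (-a n * φ (n + 1) / φ n) * u n * v n)
            - ∑' n, Real.sqrt (-a n * φ n / φ (n + 1)) * u (n + 1) * v n := Summable.tsum_sub S2 S1
      _ = (∑' n, Real.sqrt (-a n * φ (n + 1) / φ n) * u n * v n)
            - ∑' n, Real.sqrt (-a (n - 1) * φ (n - 1) / φ n) * u n * v (n - 1) := by rw [h13]
      _ = ∑' n, (Real.sqrt (-a n * φ (n + 1) / φ n) * u n * v n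
            - Real.sqrt (-a (n - 1) * φ (n - 1) / φ n) * u n * v (n - 1)) :=
          (Summable.tsum_sub S2 S3).symm
      _ = ∑' n, u n * Dstarop a φ v n := tsum_congr fun n => by simp only [Dstarop]; ring
  -- a summable sequence of squares with zero sum vanishes
  have hzero : ∀ w : ℤ → ℝ, (Summable fun n => w n ^ 2) → (∑' n, w n ^ 2) = 0 →
      ∀ n, w n = 0 := by
    intro w hw h0 n
    have hle := Summable.le_tsum hw n (fun m _ => sq_nonneg (w m))
    rw [h0] at hle
    exact sq_eq_zero_iff.1 (le_antisymm hle (sq_nonneg _))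
  -- linearity of D and D*
  have hlinD : ∀ (c : ℝ) (w : ℤ → ℝ) (n : ℤ),
      Dop a φ (fun m => c * w m) n = c * Dop a φ w n := by
    intro c w n; simp only [Dop]; ring
  have hlinDs : ∀ (c : ℝ) (w : ℤ → ℝ) (n : ℤ),
      Dstarop a φ (fun m => c * w m) n = c * Dstarop a φ w n := by
    intro c w n; simp only [Dstarop]; ring
  have hφsum : Summable fun n => φ n ^ 2 := (jac_memtwo φ).1 hφ_mem
  -- Part 3: 0 is not an eigenvalue of DD*
  have hP3 : ¬ ∃ ψ : ℤ → ℝ, Memℓp ψ 2 ∧ ψ ≠ 0 ∧ ∀ n : ℤ, Dop a φ (Dstarop a φ ψ) n = 0 := by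
    rintro ⟨ψ, hψmem, hψne, hψeq⟩
    have hψsum : Summable fun n => ψ n ^ 2 := (jac_memtwo ψ).1 hψmem
    have hDs : Summable fun n => (Dstarop a φ ψ n) ^ 2 := hmemDs ψ hψsum
    have hsum0 : ∑' n, (Dstarop a φ ψ n) ^ 2 = 0 := by
      calc ∑' n, (Dstarop a φ ψ n) ^ 2
          = ∑' n, Dstarop a φ ψ n * Dstarop a φ ψ n := tsum_congr fun n => sq (Dstarop a φ ψ n)
        _ = ∑' n, Dop a φ (Dstarop a φ ψ) n * ψ n := (hadj _ ψ hDs hψsum).symm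
        _ = ∑' n, (0 : ℝ) * ψ n := tsum_congr fun n => by rw [hψeq n]
        _ = 0 := by simp
    have hDs0 : ∀ n, Dstarop a φ ψ n = 0 := hzero _ hDs hsum0
    set g : ℤ → ℝ := fun n => Real.sqrt (-a n * φ n * φ (n + 1)) * ψ n with hg
    have hmulφ : ∀ (n : ℤ) (x : ℝ), 0 ≤ x →
        Real.sqrt (x / φ n) * φ n = Real.sqrt (x * φ n) := by
      intro n x hx
      have hrw : Real.sqrt (x / φ n) * φ n
          = Real.sqrt (x / φ n) * Real.sqrt ((φ n) ^ 2) := by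
        rw [Real.sqrt_sq (hφ_pos n).le]
      rw [hrw, ← Real.sqrt_mul (div_nonneg hx (hφ_pos n).le)]
      congr 1
      field_simp [(hφ_pos n).ne']
    have hstep : ∀ n : ℤ, g n = g (n - 1) := by
      intro n
      have h := hDs0 n
      simp only [Dstarop] at h
      have h2 : Real.sqrt (-a n * φ (n + 1) / φ n) * φ n * ψ n
          = Real.sqrt (-a (n - 1) * φ (n - 1) / φ n) * φ n * ψ (n - 1) := by
        linear_combination φ n * h
      rw [hmulφ n (-a n * φ (n + 1)) (mul_nonneg (neg_nonneg.2 (ha_neg n).le) (hφ_pos _).le),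
        hmulφ n (-a (n - 1) * φ (n - 1))
          (mul_nonneg (neg_nonneg.2 (ha_neg (n - 1)).le) (hφ_pos _).le)] at h2
      rw [hg]
      simp only
      rw [show -a n * φ n * φ (n + 1) = -a n * φ (n + 1) * φ n by ring,
        show -a (n - 1) * φ (n - 1) * φ (n - 1 + 1) = -a (n - 1) * φ (n - 1) * φ n by
          rw [sub_add_cancel]]
      exact h2
    have hconst : ∀ n : ℤ, g n = g 0 := by
      intro n
      induction n using Int.induction_on with
      | zero => rfl
      | succ k ih =>
        have h := hstep ((k : ℤ) + 1)
        rw [add_sub_cancel_right] at h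
        rw [h, ih]
      | pred k ih =>
        rw [← hstep (-(k : ℤ))]
        exact ih
    obtain ⟨m, hm⟩ := Function.ne_iff.1 hψne
    have hposm : 0 < -a m * φ m * φ (m + 1) :=
      mul_pos (mul_pos (neg_pos.2 (ha_neg m)) (hφ_pos m)) (hφ_pos (m + 1))
    have hgm : g m ≠ 0 := mul_ne_zero (ne_of_gt (Real.sqrt_pos.2 hposm)) hm
    have hg0 : g 0 ≠ 0 := by rw [← hconst m]; exact hgm
    -- limits
    have hφ0 : Tendsto φ atTop (nhds 0) := by
      have h1 : Tendsto (fun n => φ n ^ 2) atTop (nhds 0) :=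
        hφsum.tendsto_cofinite_zero.mono_left atTop_le_cofinite
      have h2 : Tendsto (fun n => Real.sqrt (φ n ^ 2)) atTop (nhds 0) := by
        have := (Real.continuous_sqrt.tendsto 0).comp h1
        simpa [Function.comp_def] using this
      exact h2.congr fun n => Real.sqrt_sq (hφ_pos n).le
    have hφ0' : Tendsto (fun n => φ (n + 1)) atTop (nhds 0) :=
      hφ0.comp (tendsto_atTop_add_const_right atTop 1 tendsto_id)
    have hψ20 : Tendsto (fun n => ψ n ^ 2) atTop (nhds 0) :=
      hψsum.tendsto_cofinite_zero.mono_left atTop_le_cofinite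
    have ha1 : Tendsto (fun n : ℤ => -a n) atTop (nhds 1) := by
      refine Tendsto.congr' ?_ tendsto_const_nhds
      filter_upwards [eventually_gt_atTop (nmax : ℤ)] with n hn
      rw [ha n (lt_of_lt_of_le hn (le_abs_self n))]
      norm_num
    have hprod : Tendsto (fun n : ℤ => -a n * φ n * φ (n + 1) * ψ n ^ 2) atTop (nhds 0) := by
      have := ((ha1.mul hφ0).mul hφ0').mul hψ20
      simpa using this
    have hconst2 : (fun n : ℤ => -a n * φ n * φ (n + 1) * ψ n ^ 2) = fun _ => (g 0) ^ 2 := by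
      funext n
      rw [← hconst n, hg]
      simp only
      rw [mul_pow, Real.sq_sqrt (mul_nonneg (mul_nonneg (neg_nonneg.2 (ha_neg n).le)
        (hφ_pos n).le) (hφ_pos (n + 1)).le)]
    rw [hconst2] at hprod
    have h00 : (g 0) ^ 2 = 0 := tendsto_nhds_unique tendsto_const_nhds hprod
    exact hg0 (sq_eq_zero_iff.1 h00)
  refine ⟨hP1, hP2, hP3, ?_⟩
  -- Part 4
  intro lam _hlam
  constructor
  · -- forward: eigenvalue of W₁ gives eigenvalue of W, distinct from lam1
    rintro ⟨v, hvmem, hvne, hveq⟩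
    have hvsum : Summable fun n => v n ^ 2 := (jac_memtwo v).1 hvmem
    have hDDv : ∀ n, Dop a φ (Dstarop a φ v) n = (lam - lam1) * v n := by
      intro n
      have h := hP2 v n
      rw [hveq n] at h
      rw [h]; ring
    have hDsv_sum : Summable fun n => (Dstarop a φ v n) ^ 2 := hmemDs v hvsum
    have hkey : ∑' n, (Dstarop a φ v n) ^ 2 = (lam - lam1) * ∑' n, v n ^ 2 := by
      calc ∑' n, (Dstarop a φ v n) ^ 2
          = ∑' n, Dstarop a φ v n * Dstarop a φ v n := tsum_congr fun n => sq _
        _ = ∑' n, Dop a φ (Dstarop a φ v) n * v n := (hadj _ v hDsv_sum hvsum).symm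
        _ = ∑' n, (lam - lam1) * v n ^ 2 := tsum_congr fun n => by rw [hDDv n]; ring
        _ = (lam - lam1) * ∑' n, v n ^ 2 := tsum_mul_left
    obtain ⟨m, hm⟩ := Function.ne_iff.1 hvne
    have hvpos : 0 < ∑' n, v n ^ 2 :=
      Summable.tsum_pos hvsum (fun _ => sq_nonneg _) m
        (lt_of_le_of_ne (sq_nonneg _) (Ne.symm (pow_ne_zero 2 hm)))
    have hDsv_nonneg : 0 ≤ ∑' n, (Dstarop a φ v n) ^ 2 :=
      tsum_nonneg fun n => sq_nonneg _
    have hlam_ne : lam ≠ lam1 := by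
      intro he
      exact hP3 ⟨v, hvmem, hvne, fun n => by rw [hDDv n, he, sub_self, zero_mul]⟩
    have hlam_ge : lam1 ≤ lam := by nlinarith
    have hlam_gt : lam1 < lam := lt_of_le_of_ne hlam_ge (Ne.symm hlam_ne)
    have hDsv_pos : 0 < ∑' n, (Dstarop a φ v n) ^ 2 := by
      rw [hkey]; exact mul_pos (by linarith) hvpos
    have hDsvne : Dstarop a φ v ≠ 0 := by
      intro h0
      have : ∑' n, (Dstarop a φ v n) ^ 2 = 0 := by
        rw [show (fun n => (Dstarop a φ v n) ^ 2) = fun _ => (0 : ℝ) by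
          funext n; rw [congrFun h0 n]; simp]
        exact tsum_zero
      linarith
    have hfun : Dop a φ (Dstarop a φ v) = fun m => (lam - lam1) * v m := funext hDDv
    refine ⟨⟨Dstarop a φ v, (jac_memtwo _).2 hDsv_sum, hDsvne, fun n => ?_⟩, hlam_ne⟩
    have h1 := hP1 (Dstarop a φ v) n
    rw [hfun, hlinDs] at h1
    linarith
  · -- backward: eigenvalue of W distinct from lam1 gives eigenvalue of W₁
    rintro ⟨⟨u, humem, hune, hueq⟩, hne⟩
    have husum : Summable fun n => u n ^ 2 := (jac_memtwo u).1 humem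
    have hDDu : ∀ n, Dstarop a φ (Dop a φ u) n = (lam - lam1) * u n := by
      intro n
      have h := hP1 u n
      rw [hueq n] at h
      rw [h]; ring
    have hDu_sum : Summable fun n => (Dop a φ u n) ^ 2 := hmemD u husum
    have hlam_gt : lam1 < lam :=
      lt_of_le_of_ne (h_lowest lam ⟨u, humem, hune, hueq⟩) (Ne.symm hne)
    obtain ⟨m, hm⟩ := Function.ne_iff.1 hune
    have hupos : 0 < ∑' n, u n ^ 2 :=
      Summable.tsum_pos husum (fun _ => sq_nonneg _) m
        (lt_of_le_of_ne (sq_nonneg _) (Ne.symm (pow_ne_zero 2 hm)))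
    have hkey : ∑' n, (Dop a φ u n) ^ 2 = (lam - lam1) * ∑' n, u n ^ 2 := by
      calc ∑' n, (Dop a φ u n) ^ 2
          = ∑' n, Dop a φ u n * Dop a φ u n := tsum_congr fun n => sq _
        _ = ∑' n, u n * Dstarop a φ (Dop a φ u) n := hadj u _ husum hDu_sum
        _ = ∑' n, (lam - lam1) * u n ^ 2 := tsum_congr fun n => by rw [hDDu n]; ring
        _ = (lam - lam1) * ∑' n, u n ^ 2 := tsum_mul_left
    have hDupos : 0 < ∑' n, (Dop a φ u n) ^ 2 := by
      rw [hkey]; exact mul_pos (by linarith) hupos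
    have hDune : Dop a φ u ≠ 0 := by
      intro h0
      have : ∑' n, (Dop a φ u n) ^ 2 = 0 := by
        rw [show (fun n => (Dop a φ u n) ^ 2) = fun _ => (0 : ℝ) by
          funext n; rw [congrFun h0 n]; simp]
        exact tsum_zero
      linarith
    have hfun : Dstarop a φ (Dop a φ u) = fun m => (lam - lam1) * u m := funext hDDu
    refine ⟨Dop a φ u, (jac_memtwo _).2 hDu_sum, hDune, fun n => ?_⟩
    have h2 := hP2 (Dop a φ u) n
    rw [hfun, hlinD] at h2
    linarith
end

section
/- In the setting of the commutation step: let W be a Jacobi operator on ℓ²(ℤ) with a(n) = −1 and b(n) = 0 for |n| > n_max, let λ₁ = −k₁ − 1/k₁ < −2 (k₁ > 1) be its lowest eigenvalue with strictly positive eigenfunction φ, and let a₁(n) = −√(a(n)a(n+1)φ(n)φ(n+2))/φ(n+1) and b₁(n) = −a(n)(φ(n)/φ(n+1) + φ(n+1)/φ(n)) + λ₁. Then Σ_{n∈ℤ} b₁(n)² = −k₁² + 1/k₁² + Σ_{n∈ℤ} b(n)² + 2 Σ_{n∈ℤ} (a(n)² − a₁(n)²), and the (convergent) bi-infinite products satisfy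 Π_{n∈ℤ} a₁(n)² = (1/k₁²) Π_{n∈ℤ} a(n)². -/
open Filter Finset

/-- If `ψ` grows geometrically (ratio `k>1`) to the right of `N` but tends to `0`
at `+∞`, it vanishes from `N` on. -/
lemma jacobi_geom_kill (k : ℝ) (hk : 1 < k) (ψ : ℤ → ℝ) (N : ℤ)
    (hrec : ∀ n, N ≤ n → ψ (n + 1) = k * ψ n)
    (h0 : Tendsto ψ atTop (nhds 0)) :
    ∀ n, N ≤ n → ψ n = 0 := by
  have hpow : ∀ n, N ≤ n → ψ n = k ^ (n - N).toNat * ψ N := by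
    refine Int.le_induction ?_ ?_
    · simp
    · intro n hn ih
      have h1 : (n + 1 - N).toNat = (n - N).toNat + 1 := by omega
      rw [hrec n hn, ih, h1, pow_succ]; ring
  have hN : ψ N = 0 := by
    by_contra hne
    have hpos : 0 < |ψ N| := abs_pos.2 hne
    obtain ⟨M, hM⟩ := Metric.tendsto_atTop.mp h0 |ψ N| hpos
    have h1 := hM (max M N) (le_max_left _ _)
    rw [Real.dist_eq, sub_zero] at h1
    have h2 : ψ (max M N) = k ^ ((max M N) - N).toNat * ψ N := hpow _ (le_max_right _ _)
    have h3 : (1 : ℝ) ≤ k ^ ((max M N) - N).toNat := one_le_pow₀ hk.le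
    rw [h2, abs_mul, abs_pow, abs_of_pos (lt_trans one_pos hk)] at h1
    nlinarith
  refine Int.le_induction ?_ ?_
  · exact hN
  · intro n hn ih
    rw [hrec n hn, ih, mul_zero]

/-- Telescoping sum over an `Icc` in `ℤ`. -/
lemma jacobi_sum_tele (g : ℤ → ℝ) (A : ℤ) :
    ∀ B, A ≤ B → ∑ n ∈ Finset.Icc A B, (g (n - 1) - g n) = g (A - 1) - g B := by
  refine Int.le_induction ?_ ?_
  · simp
  · intro B hB ih
    have hins : Finset.Icc A (B + 1) = insert (B + 1) (Finset.Icc A B) := by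
      ext x; simp only [Finset.mem_Icc, Finset.mem_insert]; omega
    rw [hins, Finset.sum_insert (by simp only [Finset.mem_Icc]; omega), ih]
    ring

/-- Shifted product over an `Icc` in `ℤ`. -/
lemma jacobi_prod_shift (f : ℤ → ℝ) (A : ℤ) :
    ∀ B, A ≤ B → (∏ n ∈ Finset.Icc A B, f (n + 1)) * f A
      = (∏ n ∈ Finset.Icc A B, f n) * f (B + 1) := by
  refine Int.le_induction ?_ ?_
  · simp [mul_comm]
  · intro B hB ih
    have hins : Finset.Icc A (B + 1) = insert (B + 1) (Finset.Icc A B) := by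
      ext x; simp only [Finset.mem_Icc, Finset.mem_insert]; omega
    rw [hins, Finset.prod_insert (by simp only [Finset.mem_Icc]; omega),
      Finset.prod_insert (by simp only [Finset.mem_Icc]; omega)]
    calc (f (B + 1 + 1) * ∏ n ∈ Finset.Icc A B, f (n + 1)) * f A
        = ((∏ n ∈ Finset.Icc A B, f (n + 1)) * f A) * f (B + 1 + 1) := by ring
      _ = ((∏ n ∈ Finset.Icc A B, f n) * f (B + 1)) * f (B + 1 + 1) := by rw [ih]
      _ = (f (B + 1) * ∏ n ∈ Finset.Icc A B, f n) * f (B + 1 + 1) := by ring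


/-- In the commutation step removing the lowest eigenvalue
`λ₁ = −k₁ − 1/k₁ < −2` (`k₁ > 1`) with positive eigenfunction `φ`:
`Σ b₁(n)² = −k₁² + 1/k₁² + Σ b(n)² + 2 Σ (a(n)² − a₁(n)²)` and
`Π a₁(n)² = (1/k₁²) Π a(n)²`. -/
theorem jacobi_commutation_sum_product_identities
    (a b : ℤ → ℝ) (nmax : ℕ)
    (ha_neg : ∀ n, a n < 0)
    (ha : ∀ n : ℤ, (nmax : ℤ) < |n| → a n = -1)
    (hb : ∀ n : ℤ, (nmax : ℤ) < |n| → b n = 0)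
    (k1 : ℝ) (hk1 : 1 < k1)
    (lam1 : ℝ) (hlam1 : lam1 = -k1 - 1 / k1)
    (φ : ℤ → ℝ) (hφ_pos : ∀ n, 0 < φ n) (hφ_mem : Memℓp φ 2)
    (hφ_eig : ∀ n : ℤ, a (n - 1) * φ (n - 1) + a n * φ (n + 1) + b n * φ n = lam1 * φ n)
    (h_lowest : ∀ μ : ℝ, IsJacobiEigenvalue a b μ → lam1 ≤ μ) :
    (∑' n : ℤ, (b1seq a φ lam1 n) ^ 2)
        = -k1 ^ 2 + 1 / k1 ^ 2 + (∑' n : ℤ, b n ^ 2)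
          + 2 * ∑' n : ℤ, (a n ^ 2 - (a1seq a φ n) ^ 2)
    ∧ (∏' n : ℤ, (a1seq a φ n) ^ 2) = (1 / k1 ^ 2) * ∏' n : ℤ, a n ^ 2 := by
  have hk0 : (0:ℝ) < k1 := lt_trans one_pos hk1
  have hkne : k1 ≠ 0 := ne_of_gt hk0
  have hφne : ∀ n, φ n ≠ 0 := fun n => ne_of_gt (hφ_pos n)
  -- φ tends to 0 at both infinities
  have hsum : Summable (fun n : ℤ => φ n ^ 2) := by
    have h := hφ_mem.summable (p := 2) (by norm_num)
    refine h.congr (fun n => ?_)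
    show ‖φ n‖ ^ ((2:ENNReal).toReal) = φ n ^ 2
    rw [show ((2:ENNReal).toReal) = ((2:ℕ):ℝ) by norm_num, Real.rpow_natCast,
      Real.norm_eq_abs, sq_abs]
  have hcof : Tendsto φ cofinite (nhds 0) := by
    have h2 := hsum.tendsto_cofinite_zero
    rw [tendsto_zero_iff_norm_tendsto_zero]
    have heq : (fun n : ℤ => ‖φ n‖) = fun n => Real.sqrt (φ n ^ 2) := by
      funext n; rw [Real.sqrt_sq_eq_abs, Real.norm_eq_abs]
    rw [heq]
    exact (Real.continuous_sqrt.tendsto' 0 0 Real.sqrt_zero).comp h2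
  have hTop : Tendsto φ atTop (nhds 0) := hcof.mono_left (Int.cofinite_eq ▸ le_sup_right)
  have hBot : Tendsto φ atBot (nhds 0) := hcof.mono_left (Int.cofinite_eq ▸ le_sup_left)
  have haR : ∀ n : ℤ, (nmax:ℤ) + 1 ≤ n → a n = -1 := fun n hn =>
    ha n (by rw [abs_of_nonneg (by omega)]; omega)
  have haL : ∀ n : ℤ, n ≤ -(nmax:ℤ) - 1 → a n = -1 := fun n hn =>
    ha n (by rw [abs_of_nonpos (by omega)]; omega)
  have hrec_r : ∀ n : ℤ, (nmax:ℤ) + 2 ≤ n → φ (n + 1) = (k1 + 1/k1) * φ n - φ (n - 1) := by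
    intro n hn
    have h := hφ_eig n
    rw [haR (n-1) (by omega), haR n (by omega),
      hb n (by rw [abs_of_nonneg (by omega)]; omega), hlam1] at h
    linarith
  have hrec_l : ∀ n : ℤ, n ≤ -(nmax:ℤ) - 1 → φ (n - 1) = (k1 + 1/k1) * φ n - φ (n + 1) := by
    intro n hn
    have h := hφ_eig n
    rw [haL (n-1) (by omega), haL n (by omega),
      hb n (by rw [abs_of_nonpos (by omega)]; omega), hlam1] at h
    linarith
  -- right ratios
  have hψ := jacobi_geom_kill k1 hk1 (fun n => φ (n+1) - φ n / k1) ((nmax:ℤ)+1) ?_ ?_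
  rotate_left
  · intro n hn
    have h := hrec_r (n+1) (by omega)
    have e1 : (n:ℤ) + 1 - 1 = n := by ring
    rw [e1] at h
    rw [h]
    field_simp
    ring
  · have h1 : Tendsto (fun n : ℤ => φ (n+1)) atTop (nhds 0) :=
      hTop.comp (tendsto_atTop_add_const_right atTop 1 tendsto_id)
    have h2 : Tendsto (fun n : ℤ => φ n / k1) atTop (nhds 0) := by
      simpa using hTop.div_const k1
    simpa using h1.sub h2
  have hRight : ∀ n : ℤ, (nmax:ℤ) + 1 ≤ n → φ n = k1 * φ (n + 1) := by
    intro n hn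
    have h := hψ n hn
    field_simp at h
    linarith
  -- left ratios
  have hχ := jacobi_geom_kill k1 hk1 (fun n => φ (-n-1) - φ (-n) / k1) ((nmax:ℤ)) ?_ ?_
  rotate_left
  · intro n hn
    have h := hrec_l (-n-1) (by omega)
    have e1 : (-n:ℤ)-1-1 = -(n+1)-1 := by ring
    have e2 : (-n:ℤ)-1+1 = -n := by ring
    have e3 : (-(n+1):ℤ) = -n-1 := by ring
    rw [e2] at h
    rw [e3] at *
    rw [show (-n:ℤ)-1-1 = -n-1-1 from rfl] at h
    rw [h]
    field_simp
    ring
  · have hneg : Tendsto (fun n : ℤ => -n-1) atTop atBot := by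
      apply tendsto_atBot_add_const_right
      exact tendsto_neg_atTop_atBot
    have hneg2 : Tendsto (fun n : ℤ => -n) atTop atBot := tendsto_neg_atTop_atBot
    have h1 : Tendsto (fun n : ℤ => φ (-n-1)) atTop (nhds 0) := hBot.comp hneg
    have h2 : Tendsto (fun n : ℤ => φ (-n) / k1) atTop (nhds 0) := by
      simpa using (hBot.comp hneg2).div_const k1
    simpa using h1.sub h2
  have hLeft : ∀ n : ℤ, n ≤ -(nmax:ℤ) - 1 → φ (n + 1) = k1 * φ n := by
    intro n hn
    have h := hχ (-n-1) (by omega)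
    have e1 : (-(-n-1):ℤ)-1 = n := by ring
    have e2 : (-(-n-1):ℤ) = n+1 := by ring
    rw [e1, e2] at h
    field_simp at h
    linarith
  -- window and auxiliary sequences
  set A : ℤ := -(nmax:ℤ) - 2 with hA
  set B : ℤ := (nmax:ℤ) + 1 with hB2
  have hAB : A ≤ B := by omega
  set C : ℤ → ℝ := fun n => a n * φ n / φ (n + 1) with hC
  set D : ℤ → ℝ := fun n => a n * φ (n + 1) / φ n with hD
  have hCr : ∀ n : ℤ, (nmax:ℤ)+1 ≤ n → C n = -k1 := by
    intro n hn
    simp only [hC]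
    rw [haR n hn, hRight n hn]
    field_simp [hφne (n+1)]
  have hCl : ∀ n : ℤ, n ≤ -(nmax:ℤ)-1 → C n = -1/k1 := by
    intro n hn
    simp only [hC]
    rw [haL n hn, hLeft n hn]
    field_simp [hφne n]
  have hDr : ∀ n : ℤ, (nmax:ℤ)+1 ≤ n → D n = -1/k1 := by
    intro n hn
    simp only [hD]
    rw [haR n hn, hRight n hn]
    field_simp [hφne (n+1)]
  have hDl : ∀ n : ℤ, n ≤ -(nmax:ℤ)-1 → D n = -k1 := by
    intro n hn
    simp only [hD]
    rw [haL n hn, hLeft n hn]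
    field_simp [hφne n]
  have haa : ∀ n : ℤ, a n ^ 2 = C n * D n := by
    intro n; simp only [hC, hD]; field_simp [hφne n, hφne (n+1)]
  have ha1sq : ∀ n : ℤ, (a1seq a φ n)^2 = C n * D (n+1) := by
    intro n
    have hX : 0 ≤ a n * a (n+1) * φ n * φ (n+2) :=
      (mul_pos (mul_pos (mul_pos_of_neg_of_neg (ha_neg n) (ha_neg (n+1))) (hφ_pos n))
        (hφ_pos (n+2))).le
    simp only [a1seq, hC, hD]
    rw [div_pow, neg_sq, Real.sq_sqrt hX, show n+1+1 = n+2 from by ring]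
    field_simp [hφne n, hφne (n+1), hφne (n+2)]
  have hb1eq : ∀ n : ℤ, b1seq a φ lam1 n = lam1 - C n - D n := by
    intro n; simp only [b1seq, hC, hD]; field_simp [hφne n, hφne (n+1)]; ring
  have hbeq : ∀ n : ℤ, b n = lam1 - C (n-1) - D n := by
    intro n
    have h := hφ_eig n
    simp only [hC, hD]
    rw [show n-1+1 = n from by ring]
    field_simp [hφne n]
    linear_combination h
  set G : ℤ → ℝ := fun n => 2*lam1*(C n) - (C n)^2 - 2*((a1seq a φ n)^2) with hG
  have hpt : ∀ n : ℤ, (b1seq a φ lam1 n)^2 - (b n)^2 - 2*(a n^2 - (a1seq a φ n)^2)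
      = G (n-1) - G n := by
    intro n
    simp only [hG]
    rw [hb1eq, hbeq, haa, ha1sq n, ha1sq (n-1), show n-1+1 = n from by ring]
    ring
  have htele : ∑ n ∈ Finset.Icc A B,
      ((b1seq a φ lam1 n)^2 - (b n)^2 - 2*(a n^2 - (a1seq a φ n)^2)) = G (A-1) - G B := by
    rw [Finset.sum_congr rfl fun n _ => hpt n]
    exact jacobi_sum_tele G A B hAB
  have hbd : G (A-1) - G B = -k1^2 + 1/k1^2 := by
    simp only [hG]
    rw [ha1sq (A-1), ha1sq B, show A-1+1 = A from by ring]
    rw [hCl (A-1) (by omega), hDl A (by omega), hCr B (by omega), hDr (B+1) (by omega), hlam1]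
    field_simp
    ring
  -- vanishing outside the window
  have hb1_off : ∀ n : ℤ, n ∉ Finset.Icc A B → b1seq a φ lam1 n = 0 := by
    intro n hn
    simp only [Finset.mem_Icc] at hn
    rw [hb1eq]
    rcases (by omega : (nmax:ℤ)+1 ≤ n ∨ n ≤ -(nmax:ℤ)-1) with h | h
    · rw [hCr n h, hDr n h, hlam1]; ring
    · rw [hCl n h, hDl n h, hlam1]; ring
  have hb_off : ∀ n : ℤ, n ∉ Finset.Icc A B → b n = 0 := by
    intro n hn
    simp only [Finset.mem_Icc] at hn
    apply hb
    rcases le_or_gt 0 n with h | h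
    · rw [abs_of_nonneg h]; omega
    · rw [abs_of_neg h]; omega
  have ha1_off : ∀ n : ℤ, n ∉ Finset.Icc A B → (a1seq a φ n)^2 = 1 := by
    intro n hn
    simp only [Finset.mem_Icc] at hn
    rw [ha1sq]
    rcases (by omega : (nmax:ℤ)+1 ≤ n ∨ n ≤ -(nmax:ℤ)-2) with h | h
    · rw [hCr n h, hDr (n+1) (by omega)]; field_simp
    · rw [hCl n (by omega), hDl (n+1) (by omega)]; field_simp
  have ha_off : ∀ n : ℤ, n ∉ Finset.Icc A B → a n ^ 2 = 1 := by
    intro n hn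
    simp only [Finset.mem_Icc] at hn
    rcases (by omega : (nmax:ℤ)+1 ≤ n ∨ n ≤ -(nmax:ℤ)-1) with h | h
    · rw [haR n h]; ring
    · rw [haL n h]; ring
  have hdiff_off : ∀ n : ℤ, n ∉ Finset.Icc A B → a n ^2 - (a1seq a φ n)^2 = 0 := by
    intro n hn
    rw [ha_off n hn, ha1_off n hn]; ring
  -- convert tsums and tprods to finite sums/products
  have hs1 : ∑' n : ℤ, (b1seq a φ lam1 n)^2 = ∑ n ∈ Finset.Icc A B, (b1seq a φ lam1 n)^2 :=
    tsum_eq_sum (fun n hn => by rw [hb1_off n hn]; ring)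
  have hs2 : ∑' n : ℤ, (b n)^2 = ∑ n ∈ Finset.Icc A B, (b n)^2 :=
    tsum_eq_sum (fun n hn => by rw [hb_off n hn]; ring)
  have hs3 : ∑' n : ℤ, (a n^2 - (a1seq a φ n)^2)
      = ∑ n ∈ Finset.Icc A B, (a n^2 - (a1seq a φ n)^2) :=
    tsum_eq_sum (fun n hn => hdiff_off n hn)
  have hp1 : ∏' n : ℤ, (a1seq a φ n)^2 = ∏ n ∈ Finset.Icc A B, (a1seq a φ n)^2 :=
    tprod_eq_prod (fun n hn => ha1_off n hn)
  have hp2 : ∏' n : ℤ, a n^2 = ∏ n ∈ Finset.Icc A B, a n^2 :=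
    tprod_eq_prod (fun n hn => ha_off n hn)
  have hsplit : ∑ n ∈ Finset.Icc A B,
      ((b1seq a φ lam1 n)^2 - (b n)^2 - 2*(a n^2 - (a1seq a φ n)^2))
      = (∑ n ∈ Finset.Icc A B, (b1seq a φ lam1 n)^2) - (∑ n ∈ Finset.Icc A B, (b n)^2)
        - 2 * ∑ n ∈ Finset.Icc A B, (a n^2 - (a1seq a φ n)^2) := by
    rw [Finset.sum_sub_distrib, Finset.sum_sub_distrib, ← Finset.mul_sum]
  -- product identity on the window
  have hshift := jacobi_prod_shift D A B hAB
  rw [hDl A (by omega), hDr (B+1) (by omega)] at hshift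
  have hP1 : ∏ n ∈ Finset.Icc A B, (a1seq a φ n)^2
      = (∏ n ∈ Finset.Icc A B, C n) * ∏ n ∈ Finset.Icc A B, D (n+1) := by
    rw [← Finset.prod_mul_distrib]
    exact Finset.prod_congr rfl fun n _ => ha1sq n
  have hP2 : ∏ n ∈ Finset.Icc A B, (a n)^2
      = (∏ n ∈ Finset.Icc A B, C n) * ∏ n ∈ Finset.Icc A B, D n := by
    rw [← Finset.prod_mul_distrib]
    exact Finset.prod_congr rfl fun n _ => haa n
  have hDD : ∏ n ∈ Finset.Icc A B, D (n+1)
      = (1/k1^2) * ∏ n ∈ Finset.Icc A B, D n := by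
    have hk3 : (-k1 : ℝ) ≠ 0 := neg_ne_zero.mpr hkne
    have h2 : ∏ n ∈ Finset.Icc A B, D (n+1)
        = ((∏ n ∈ Finset.Icc A B, D n) * (-1/k1)) / (-k1) := by
      rw [eq_div_iff hk3]; exact hshift
    rw [h2]
    field_simp [hkne]
  have hfin1 : (∑' n : ℤ, (b1seq a φ lam1 n)^2)
      = -k1 ^ 2 + 1 / k1 ^ 2 + (∑' n : ℤ, (b n) ^ 2)
        + 2 * ∑' n : ℤ, (a n ^ 2 - (a1seq a φ n) ^ 2) := by
    rw [hs1, hs2, hs3]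
    have h := htele
    rw [hsplit] at h
    rw [hbd] at h
    linarith
  have hfin2 : (∏' n : ℤ, (a1seq a φ n) ^ 2) = (1 / k1 ^ 2) * ∏' n : ℤ, a n ^ 2 := by
    rw [hp1, hp2, hP1, hP2, hDD]
    ring
  exact ⟨hfin1, hfin2⟩
end

section
/- Let ω > 0, let c_n = cosh(ωn) for n ∈ ℤ, and define a₁(n) = −√(c_n c_{n+2}) / c_{n+1}. Then the series Σ_{n∈ℤ} log(a₁(n)²) converges and equals 2ω. -/
open Filter Real Topology

lemma logcosh_aux (x : ℝ) :
    Real.log (Real.cosh x) = x - Real.log 2 + Real.log (1 + Real.exp (-(2*x))) := by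
  have h1 : Real.cosh x = Real.exp x * (1 + Real.exp (-(2*x))) / 2 := by
    rw [Real.cosh_eq]
    have : Real.exp x * Real.exp (-(2*x)) = Real.exp (-x) := by
      rw [← Real.exp_add]; ring_nf
    nlinarith [this]
  have hp : (0:ℝ) < 1 + Real.exp (-(2*x)) := by positivity
  rw [h1, Real.log_div (by positivity) (by norm_num),
    Real.log_mul (Real.exp_ne_zero x) (ne_of_gt hp), Real.log_exp]
  ring

lemma cosh_ineq_aux (a d : ℝ) :
    Real.cosh (a + d) ^ 2 ≤ Real.cosh a * Real.cosh (a + 2*d) := by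
  have h1 := Real.cosh_add a (2*d)
  have h2 := Real.cosh_add a d
  have h3 := Real.cosh_two_mul d
  have h4 := Real.sinh_two_mul d
  have h5 := Real.cosh_sq_sub_sinh_sq a
  have h6 := Real.cosh_sq_sub_sinh_sq d
  have key : Real.cosh a * Real.cosh (a + 2*d) - Real.cosh (a+d)^2 = Real.sinh d ^ 2 := by
    rw [h1, h2, h3, h4]
    nlinarith [h5, h6]
  nlinarith [sq_nonneg (Real.sinh d), key]

set_option maxHeartbeats 1000000 in
/-- With `c_n = cosh(ωn)` and
`a₁(n) = −√(c_n c_{n+2})/c_{n+1}`, the series `Σ_{n∈ℤ} log(a₁(n)²)` converges and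
equals `2ω`. -/
theorem reflectionless_log_sum (ω : ℝ) (hω : 0 < ω)
    (c : ℤ → ℝ) (hc : ∀ n : ℤ, c n = Real.cosh (ω * n))
    (a1 : ℤ → ℝ) (ha1 : ∀ n : ℤ, a1 n = -Real.sqrt (c n * c (n + 2)) / c (n + 1)) :
    HasSum (fun n : ℤ => Real.log ((a1 n) ^ 2)) (2 * ω) := by
  set f : ℤ → ℝ := fun n => Real.log (Real.cosh (ω * n)) with hf
  have hcpos : ∀ n : ℤ, 0 < c n := fun n => (hc n) ▸ Real.cosh_pos _
  -- the summand in terms of f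
  have hterm : ∀ n : ℤ, Real.log ((a1 n) ^ 2) = f n + f (n+2) - 2 * f (n+1) := by
    intro n
    have hsq : (a1 n) ^ 2 = (c n * c (n+2)) / (c (n+1))^2 := by
      rw [ha1 n, div_pow, neg_pow, Real.sq_sqrt (mul_pos (hcpos n) (hcpos (n+2))).le]
      ring
    rw [hsq, Real.log_div (mul_pos (hcpos n) (hcpos (n+2))).ne' (pow_pos (hcpos (n+1)) 2).ne',
      Real.log_mul (hcpos n).ne' (hcpos (n+2)).ne', Real.log_pow]
    simp only [hf, hc]
    push_cast
    ring_nf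
  -- key inequality : each term nonneg
  have hnonneg : ∀ n : ℤ, 0 ≤ f n + f (n+2) - 2 * f (n+1) := by
    intro n
    have hkey : Real.cosh (ω * ((n:ℝ)+1)) ^ 2 ≤ Real.cosh (ω * n) * Real.cosh (ω * ((n:ℝ)+2)) := by
      have := cosh_ineq_aux (ω * n) ω
      have e1 : ω * ((n : ℝ) + 1) = ω * n + ω := by ring
      have e2 : ω * ((n : ℝ) + 2) = ω * n + 2 * ω := by ring
      rw [e1, e2]; exact this
    have h2 : 2 * f (n+1) = Real.log (Real.cosh (ω * ((n:ℝ)+1)) ^ 2) := by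
      rw [Real.log_pow]; simp only [hf]; push_cast; ring
    have h1 : f n + f (n+2) = Real.log (Real.cosh (ω * n) * Real.cosh (ω * ((n:ℝ)+2))) := by
      rw [Real.log_mul (Real.cosh_pos _).ne' (Real.cosh_pos _).ne']
      simp only [hf]; push_cast; ring
    have hlog := Real.log_le_log (pow_pos (Real.cosh_pos _) 2) hkey
    linarith [h1, h2, hlog]
  -- auxiliary sequence and its limit
  set v : ℕ → ℝ := fun N => Real.log (1 + Real.exp (-(2 * (ω * N)))) with hv
  have hvlim : Tendsto v atTop (𝓝 0) := by
    have h1 : Tendsto (fun N : ℕ => -(2 * (ω * N))) atTop atBot := by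
      have h0 : Tendsto (fun N : ℕ => 2 * (ω * (N:ℝ))) atTop atTop := by
        simpa [mul_assoc] using
          (tendsto_natCast_atTop_atTop (R := ℝ)).const_mul_atTop
            (show (0:ℝ) < 2 * ω by positivity)
      exact tendsto_neg_atTop_atBot.comp h0
    have h2 : Tendsto (fun N : ℕ => Real.exp (-(2 * (ω * N)))) atTop (𝓝 0) :=
      Real.tendsto_exp_atBot.comp h1
    have h3 : Tendsto (fun N : ℕ => 1 + Real.exp (-(2 * (ω * N)))) atTop (𝓝 1) := by
      simpa using h2.const_add 1
    have h4 : ContinuousAt Real.log 1 := Real.continuousAt_log (by norm_num)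
    have := h4.tendsto.comp h3
    simpa [hv, Function.comp_def] using this
  -- limit of the difference  f(N+1) - f(N)
  have hfN : ∀ N : ℕ, f N = ω * N - Real.log 2 + v N := by
    intro N; simp only [hf, hv]; rw [logcosh_aux]; norm_num
  have hglim : Tendsto (fun N : ℕ => f ((N:ℤ)+1) - f N) atTop (𝓝 ω) := by
    have heq : ∀ N : ℕ, f ((N:ℤ)+1) - f N = ω + (v (N+1) - v N) := by
      intro N
      have e : ((N:ℤ)+1 : ℤ) = ((N+1 : ℕ) : ℤ) := by push_cast; ring
      rw [e, hfN, hfN]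
      push_cast; ring
    have hv2 : Tendsto (fun N : ℕ => v (N+1) - v N) atTop (𝓝 0) := by
      have := (hvlim.comp (tendsto_add_atTop_nat 1)).sub hvlim
      simpa [Function.comp] using this
    simp only [heq]
    simpa using hv2.const_add ω
  -- sum over nonnegative integers
  set S : ℝ := ω - (f 1 - f 0) with hS
  have hposSum : HasSum (fun n : ℕ => Real.log ((a1 n) ^ 2)) S := by
    rw [hasSum_iff_tendsto_nat_of_nonneg (fun n => by rw [hterm]; exact hnonneg n)]
    have hsum : ∀ N : ℕ, ∑ i ∈ Finset.range N, Real.log ((a1 i) ^ 2)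
        = (f ((N:ℤ)+1) - f N) - (f 1 - f 0) := by
      intro N
      have hc1 : ∀ i ∈ Finset.range N, Real.log ((a1 i) ^ 2)
          = (fun k : ℕ => f ((k:ℤ)+1) - f k) (i+1) - (fun k : ℕ => f ((k:ℤ)+1) - f k) i := by
        intro i _
        rw [hterm]
        simp only
        push_cast
        ring
      rw [Finset.sum_congr rfl hc1, Finset.sum_range_sub (fun k : ℕ => f ((k:ℤ)+1) - f k)]
      norm_num
    simp only [hsum]
    exact hglim.sub_const _
  -- symmetry : term at -(k+1) equals term at k-1
  have hev : ∀ m : ℤ, f (-m) = f m := by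
    intro m
    simp only [hf]
    push_cast
    rw [show ω * (-(m:ℝ)) = -(ω * m) by ring, Real.cosh_neg]
  have hsymm : ∀ k : ℤ, Real.log ((a1 (-(k+1))) ^ 2) = Real.log ((a1 (k-1)) ^ 2) := by
    intro k
    rw [hterm, hterm]
    have e2 : (-(k+1) + 2 : ℤ) = -(k-1) := by ring
    have e3 : (-(k+1) + 1 : ℤ) = -k := by ring
    rw [e2, e3, show (-(k+1) : ℤ) = -(k+1) from rfl, hev, hev, hev]
    have e4 : (k-1+2 : ℤ) = k+1 := by ring
    have e5 : (k-1+1 : ℤ) = k := by ring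
    rw [e4, e5]
    ring
  -- sum over negative integers
  have hnegSum : HasSum (fun n : ℕ => Real.log ((a1 (-((n:ℤ)+1))) ^ 2))
      (S + Real.log ((a1 (-1)) ^ 2)) := by
    have hshift : HasSum (fun n : ℕ =>
        (fun k : ℕ => Real.log ((a1 ((k:ℤ)-1)) ^ 2)) (n + 1)) S := by
      have he : (fun n : ℕ => (fun k : ℕ => Real.log ((a1 ((k:ℤ)-1)) ^ 2)) (n + 1))
          = fun n : ℕ => Real.log ((a1 n) ^ 2) := by
        funext n; simp only; push_cast; ring_nf
      rw [he]; exact hposSum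
    have := (hasSum_nat_add_iff (f := fun k : ℕ => Real.log ((a1 ((k:ℤ)-1)) ^ 2)) 1).mp hshift
    have he2 : (fun n : ℕ => Real.log ((a1 (-((n:ℤ)+1))) ^ 2))
        = fun k : ℕ => Real.log ((a1 ((k:ℤ)-1)) ^ 2) := by
      funext n; rw [hsymm]
    rw [he2]
    convert this using 2
    · rfl
    norm_num
  -- combine
  have htotal := HasSum.of_nat_of_neg_add_one
    (f := fun n : ℤ => Real.log ((a1 n) ^ 2)) hposSum hnegSum
  have hfinal : S + (S + Real.log ((a1 (-1)) ^ 2)) = 2 * ω := by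
    have ht1 : Real.log ((a1 (-1)) ^ 2) = f (-1) + f 1 - 2 * f 0 := by
      have := hterm (-1); norm_num at this ⊢; convert this using 3 <;> norm_num
    have hf0 : f 0 = 0 := by simp [hf]
    have hfm1 : f (-1) = f 1 := hev 1
    rw [ht1, hS]; linarith [hf0, hfm1]
  rw [hfinal] at htotal
  exact htotal
end

section
/- Let ω > 0, let c_n = cosh(ωn) for n ∈ ℤ, and define a₁(n) = −√(c_n c_{n+2}) / c_{n+1} and b₁(n) = c_n/c_{n+1} − c_{n−1}/c_n. Then Σ_{n∈ℤ} b₁(n)² + 2 Σ_{n∈ℤ} (a₁(n)² − 1 − log(a₁(n)²)) = e^{2ω} − e^{−2ω} − 4ω. (In particular, with k₁ = e^{ω} this is equality in the inequality Σ_j (k_j² − 1/k_j² − log(k_j⁴)) ≤ Σ b(n)² + 2Σ(a(n)² − 1 − log a(n)²) for the reflectionless Jacobi operator with these coefficients, whose unique eigenvalue outside [−2,2] is λ₁ = −2cosh(ω).) -/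
open Real Filter Topology Finset

/-- With `c_n = cosh(ωn)`, `a₁(n) = −√(c_n c_{n+2})/c_{n+1}` and
`b₁(n) = c_n/c_{n+1} − c_{n−1}/c_n` (the reflectionless Jacobi operator of
Spiridonov–Zhedanov), both series converge and
`Σ b₁(n)² + 2 Σ (a₁(n)² − 1 − log a₁(n)²) = e^{2ω} − e^{−2ω} − 4ω`;
i.e. equality holds in the sharp spectral inequality for this operator. -/
theorem reflectionless_equality (ω : ℝ) (hω : 0 < ω)
    (c : ℤ → ℝ) (hc : ∀ n : ℤ, c n = Real.cosh (ω * n))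
    (a1 : ℤ → ℝ) (ha1 : ∀ n : ℤ, a1 n = -Real.sqrt (c n * c (n + 2)) / c (n + 1))
    (b1 : ℤ → ℝ) (hb1 : ∀ n : ℤ, b1 n = c n / c (n + 1) - c (n - 1) / c n) :
    Summable (fun n : ℤ => (b1 n) ^ 2)
    ∧ Summable (fun n : ℤ => (a1 n) ^ 2 - 1 - Real.log ((a1 n) ^ 2))
    ∧ (∑' n : ℤ, (b1 n) ^ 2)
        + 2 * ∑' n : ℤ, ((a1 n) ^ 2 - 1 - Real.log ((a1 n) ^ 2))
      = Real.exp (2 * ω) - Real.exp (-(2 * ω)) - 4 * ω := by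
  set S := Real.sinh ω with hS
  set P := Real.cosh ω with hP
  have hSpos : 0 < S := by rw [hS]; positivity
  have hPpos : 0 < P := Real.cosh_pos ω
  have hPS : P ^ 2 - S ^ 2 = 1 := Real.cosh_sq_sub_sinh_sq ω
  set s : ℤ → ℝ := fun n => Real.sinh (ω * n) with hs
  have hcpos : ∀ n : ℤ, 0 < c n := fun n => by rw [hc]; exact Real.cosh_pos _
  have hcne : ∀ n : ℤ, c n ≠ 0 := fun n => (hcpos n).ne'
  have hcs : ∀ n : ℤ, (c n) ^ 2 - (s n) ^ 2 = 1 := fun n => by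
    rw [hc]; exact Real.cosh_sq_sub_sinh_sq _
  have hrec : ∀ n : ℤ, c (n + 1) = c n * P + s n * S := by
    intro n
    rw [hc, hc]
    have h : ω * ((n : ℤ) + 1 : ℤ) = ω * n + ω := by push_cast; ring
    rw [h, Real.cosh_add]
  have hsrec : ∀ n : ℤ, s (n + 1) = s n * P + c n * S := by
    intro n
    simp only [hs]
    rw [hc]
    have h : ω * ((n : ℤ) + 1 : ℤ) = ω * n + ω := by push_cast; ring
    rw [h, Real.sinh_add]
  have hrecm : ∀ n : ℤ, c (n - 1) = c n * P - s n * S := by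
    intro n
    rw [hc, hc]
    simp only [hs]
    have h : ω * ((n : ℤ) - 1 : ℤ) = ω * n - ω := by push_cast; ring
    rw [h, Real.cosh_sub]
  -- tanh sequence
  set T : ℤ → ℝ := fun n => s n / c n with hT
  have e1 : ∀ n : ℤ, T (n + 1) - T n = S / (c n * c (n + 1)) := by
    intro n
    simp only [hT]
    rw [hsrec n, hrec n]
    have h1 : c n * P + s n * S ≠ 0 := by rw [← hrec n]; exact hcne _
    have hA : c n ≠ 0 := hcne n
    have h1' : P * c n + s n * S ≠ 0 := by rw [mul_comm]; exact h1
    field_simp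
    linear_combination (S) * hcs n
  have hkey : ∀ n : ℤ, P * (T (n + 1) - T n) = S * (1 - T n * T (n + 1)) := by
    intro n
    simp only [hT]
    rw [hsrec n, hrec n]
    have h1 : c n * P + s n * S ≠ 0 := by rw [← hrec n]; exact hcne _
    have hA : c n ≠ 0 := hcne n
    have h1' : P * c n + s n * S ≠ 0 := by rw [mul_comm]; exact h1
    field_simp
    ring
  -- a1 squared
  have ha2' : ∀ n : ℤ, a1 n ^ 2 = c n * c (n + 2) / c (n + 1) ^ 2 := by
    intro n
    have hnn : 0 ≤ c n * c (n + 2) := le_of_lt (mul_pos (hcpos n) (hcpos _))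
    rw [ha1, div_pow, neg_pow]
    simp only [Real.sq_sqrt hnn]
    ring
  have ha2T : ∀ n : ℤ, a1 n ^ 2 - 1 = S ^ 2 * (1 - T (n + 1) ^ 2) := by
    intro n
    rw [ha2']
    have h2 : c (n + 2) = c (n + 1) * P + s (n + 1) * S := by
      have := hrec (n + 1); rwa [show n + 1 + 1 = n + 2 by ring] at this
    simp only [hT]
    rw [h2, hrec n, hsrec n]
    have h1 : c n * P + s n * S ≠ 0 := by rw [← hrec n]; exact hcne _
    have hA : c n ≠ 0 := hcne n
    field_simp
    linear_combination ((s n^2 - c n^2) * S^2) * hPS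
  have ha2pos : ∀ n : ℤ, 0 < a1 n ^ 2 := by
    intro n
    have h := ha2T n
    have hT1 : (T (n+1))^2 ≤ 1 := by
      simp only [hT]
      rw [div_pow, div_le_one (pow_pos (hcpos _) 2)]
      nlinarith [hcs (n+1)]
    nlinarith
  -- b1
  have hbT : ∀ n : ℤ, b1 n = -(S * (T (n + 1) - T n)) := by
    intro n
    rw [e1 n, hb1, hrecm n]
    have h1 : c n * P + s n * S ≠ 0 := by rw [← hrec n]; exact hcne _
    have hA : c n ≠ 0 := hcne n
    rw [hrec n]
    field_simp
    linear_combination (-(c n)^2) * hPS + (-S^2) * hcs n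
  -- telescoping function
  set Ψ : ℤ → ℝ := fun n => 2*S*P*(T n) - S^2*(T n)^2 - 2*Real.log (c (n+1) / c n) with hΨ
  set t : ℤ → ℝ := fun n => b1 n ^ 2 + 2*(a1 n ^ 2 - 1 - Real.log (a1 n ^ 2)) with ht
  have htel : ∀ n : ℤ, t n = Ψ (n + 1) - Ψ n := by
    intro n
    have hlog : Real.log (a1 n ^ 2)
        = (Real.log (c (n + 2)) - Real.log (c (n + 1)))
          - (Real.log (c (n + 1)) - Real.log (c n)) := by
      rw [ha2', Real.log_div (mul_ne_zero (hcne n) (hcne _)) (pow_ne_zero 2 (hcne _)), Real.log_mul (hcne n) (hcne _),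
        Real.log_pow]
      push_cast
      ring
    simp only [ht, hΨ]
    rw [hlog, Real.log_div (hcne _) (hcne _), Real.log_div (hcne _) (hcne _),
      show n + 1 + 1 = n + 2 by ring, hbT n]
    have halg : (-(S * (T (n + 1) - T n))) ^ 2 + 2 * (a1 n ^ 2 - 1)
        = (2*S*P*(T (n+1)) - S^2*(T (n+1))^2) - (2*S*P*(T n) - S^2*(T n)^2) := by
      rw [ha2T n]
      linear_combination (-2*S) * hkey n
    linear_combination halg
  -- nonnegativity of t
  have ht0 : ∀ n : ℤ, 0 ≤ t n := by
    intro n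
    have h1 : Real.log (a1 n ^ 2) ≤ a1 n ^ 2 - 1 := Real.log_le_sub_one_of_pos (ha2pos n)
    have h2 : 0 ≤ b1 n ^ 2 := sq_nonneg _
    simp only [ht]
    linarith
  -- limits
  set q : ℕ → ℝ := fun N => Real.exp (-(2*ω)) ^ N with hq
  have hqpos : ∀ N, 0 < q N := fun N => pow_pos (Real.exp_pos _) N
  have hq0 : Filter.Tendsto q Filter.atTop (nhds 0) := by
    apply tendsto_pow_atTop_nhds_zero_of_lt_one (le_of_lt (Real.exp_pos _))
    rw [Real.exp_lt_one_iff]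
    linarith
  have hu : ∀ N : ℕ, Real.exp (ω * N) > 0 := fun N => Real.exp_pos _
  have hqu : ∀ N : ℕ, q N = (Real.exp (ω * N))⁻¹ ^ 2 := by
    intro N
    show Real.exp (-(2*ω)) ^ N = (Real.exp (ω * N))⁻¹ ^ 2
    rw [← Real.exp_nat_mul, ← Real.exp_neg (ω * N), pow_two, ← Real.exp_add]
    congr 1
    ring
  have hTq : ∀ N : ℕ, T (N : ℤ) = (1 - q N) / (1 + q N) := by
    intro N
    simp only [hT, hs]
    rw [hc]
    push_cast
    rw [Real.sinh_eq, Real.cosh_eq, hqu N, Real.exp_neg]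
    have h := hu N
    set u := Real.exp (ω * N)
    field_simp
  have hCratio : ∀ N : ℕ, c ((N : ℤ) + 1) / c (N : ℤ)
      = (Real.exp ω + Real.exp (-ω) * q N) / (1 + q N) := by
    intro N
    rw [hc, hc]
    push_cast
    rw [show ω * ((N : ℝ) + 1) = ω * N + ω by ring, Real.cosh_add,
      Real.cosh_eq (ω * N), Real.sinh_eq (ω * N), Real.cosh_eq ω, Real.sinh_eq ω,
      hqu N, Real.exp_neg ω, Real.exp_neg (ω * (N:ℝ))]
    have h := hu N
    have h2 := Real.exp_pos ω
    set u := Real.exp (ω * N)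
    set v := Real.exp ω
    field_simp
    ring
  have hCratioNeg : ∀ N : ℕ, c (-(N : ℤ) + 1) / c (-(N : ℤ))
      = (Real.exp (-ω) + Real.exp ω * q N) / (1 + q N) := by
    intro N
    rw [hc, hc]
    push_cast
    rw [show ω * (-(N : ℝ) + 1) = -(ω * N) + ω by ring, show ω * (-(N:ℝ)) = -(ω * N) by ring,
      Real.cosh_add, Real.cosh_neg, Real.sinh_neg,
      Real.cosh_eq (ω * N), Real.sinh_eq (ω * N), Real.cosh_eq ω, Real.sinh_eq ω,
      hqu N, Real.exp_neg ω, Real.exp_neg (ω * (N:ℝ))]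
    have h := hu N
    have h2 := Real.exp_pos ω
    set u := Real.exp (ω * N)
    set v := Real.exp ω
    field_simp
    ring
  have hTneg : ∀ N : ℕ, T (-(N : ℤ)) = -T (N : ℤ) := by
    intro N
    simp only [hT, hs]
    rw [hc, hc]
    push_cast
    rw [show ω * (-(N:ℝ)) = -(ω * N) by ring, Real.sinh_neg, Real.cosh_neg]
    ring
  have hTlim : Filter.Tendsto (fun N : ℕ => T (N : ℤ)) Filter.atTop (nhds 1) := by
    have h : Filter.Tendsto (fun N : ℕ => (1 - q N) / (1 + q N)) Filter.atTop (nhds ((1 - 0)/(1 + 0))) := by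
      apply Filter.Tendsto.div
      · exact tendsto_const_nhds.sub hq0
      · exact tendsto_const_nhds.add hq0
      · norm_num
    simp only [sub_zero, add_zero, div_one] at h
    exact h.congr (fun N => (hTq N).symm)
  have hLogLim : Filter.Tendsto (fun N : ℕ => Real.log (c ((N:ℤ)+1) / c (N:ℤ))) Filter.atTop (nhds ω) := by
    have h : Filter.Tendsto (fun N : ℕ => (Real.exp ω + Real.exp (-ω) * q N) / (1 + q N))
        Filter.atTop (nhds ((Real.exp ω + Real.exp (-ω) * 0)/(1 + 0))) := by
      apply Filter.Tendsto.div
      · exact tendsto_const_nhds.add (tendsto_const_nhds.mul hq0)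
      · exact tendsto_const_nhds.add hq0
      · norm_num
    simp only [mul_zero, add_zero, div_one] at h
    have h2 : Filter.Tendsto (fun N : ℕ => c ((N:ℤ)+1) / c (N:ℤ)) Filter.atTop (nhds (Real.exp ω)) :=
      h.congr (fun N => (hCratio N).symm)
    have hcont := (Real.continuousAt_log (Real.exp_pos ω).ne').tendsto
    have := hcont.comp h2
    simpa [Real.log_exp, Function.comp_def] using this
  have hLogLimNeg : Filter.Tendsto (fun N : ℕ => Real.log (c (-(N:ℤ)+1) / c (-(N:ℤ)))) Filter.atTop (nhds (-ω)) := by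
    have h : Filter.Tendsto (fun N : ℕ => (Real.exp (-ω) + Real.exp ω * q N) / (1 + q N))
        Filter.atTop (nhds ((Real.exp (-ω) + Real.exp ω * 0)/(1 + 0))) := by
      apply Filter.Tendsto.div
      · exact tendsto_const_nhds.add (tendsto_const_nhds.mul hq0)
      · exact tendsto_const_nhds.add hq0
      · norm_num
    simp only [mul_zero, add_zero, div_one] at h
    have h2 : Filter.Tendsto (fun N : ℕ => c (-(N:ℤ)+1) / c (-(N:ℤ))) Filter.atTop (nhds (Real.exp (-ω))) :=
      h.congr (fun N => (hCratioNeg N).symm)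
    have hcont := (Real.continuousAt_log (Real.exp_pos (-ω)).ne').tendsto
    have := hcont.comp h2
    simpa [Real.log_exp, Function.comp_def] using this
  -- limits of Ψ
  have hΨplus : Filter.Tendsto (fun N : ℕ => Ψ (N : ℤ)) Filter.atTop (nhds (2*S*P - S^2 - 2*ω)) := by
    simp only [hΨ]
    have := ((tendsto_const_nhds.mul hTlim : Filter.Tendsto (fun N : ℕ => (2*S*P) * T (N:ℤ)) _ _).sub
        ((tendsto_const_nhds.mul (hTlim.mul hTlim)) : Filter.Tendsto (fun N : ℕ => (S^2) * (T (N:ℤ) * T (N:ℤ))) _ _)).sub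
        (tendsto_const_nhds.mul hLogLim : Filter.Tendsto (fun N : ℕ => (2:ℝ) * Real.log (c ((N:ℤ)+1)/c (N:ℤ))) _ _)
    have heq : (2*S*P) * 1 - (S^2) * (1*1) - 2*ω = 2*S*P - S^2 - 2*ω := by ring
    rw [heq] at this
    exact this.congr (fun N => by ring)
  have hΨminus : Filter.Tendsto (fun N : ℕ => Ψ (-(N : ℤ))) Filter.atTop (nhds (-(2*S*P) - S^2 + 2*ω)) := by
    simp only [hΨ]
    have h1 : Filter.Tendsto (fun N : ℕ => T (-(N:ℤ))) Filter.atTop (nhds (-1)) := by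
      have := hTlim.neg
      rw [show -(1:ℝ) = -1 from rfl]
      exact this.congr (fun N => (hTneg N).symm)
    have := ((tendsto_const_nhds.mul h1 : Filter.Tendsto (fun N : ℕ => (2*S*P) * T (-(N:ℤ))) _ _).sub
        ((tendsto_const_nhds.mul (h1.mul h1)) : Filter.Tendsto (fun N : ℕ => (S^2) * (T (-(N:ℤ)) * T (-(N:ℤ)))) _ _)).sub
        (tendsto_const_nhds.mul hLogLimNeg : Filter.Tendsto (fun N : ℕ => (2:ℝ) * Real.log (c (-(N:ℤ)+1)/c (-(N:ℤ)))) _ _)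
    have heq : (2*S*P) * (-1) - (S^2) * ((-1)*(-1)) - 2*(-ω) = -(2*S*P) - S^2 + 2*ω := by ring
    rw [heq] at this
    exact this.congr (fun N => by ring)
  -- HasSum on nonnegative side
  have hpartial : ∀ N : ℕ, ∑ i ∈ Finset.range N, t (i : ℤ) = Ψ (N : ℤ) - Ψ 0 := by
    intro N
    have h := Finset.sum_range_sub (fun i : ℕ => Ψ (i : ℤ)) N
    push_cast at h
    rw [← h]
    exact Finset.sum_congr rfl (fun i _ => htel _)
  have hsum1 : HasSum (fun n : ℕ => t (n : ℤ)) ((2*S*P - S^2 - 2*ω) - Ψ 0) := by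
    rw [hasSum_iff_tendsto_nat_of_nonneg (fun i => ht0 _)]
    have := hΨplus.sub (tendsto_const_nhds : Filter.Tendsto (fun _ : ℕ => Ψ 0) _ _)
    exact this.congr (fun N => (hpartial N).symm)
  have hpartial2 : ∀ N : ℕ, ∑ i ∈ Finset.range N, t (-((i : ℤ) + 1)) = Ψ 0 - Ψ (-(N : ℤ)) := by
    intro N
    have h := Finset.sum_range_sub' (fun i : ℕ => Ψ (-(i : ℤ))) N
    push_cast at h
    simp only [neg_zero] at h
    rw [← h]
    refine Finset.sum_congr rfl (fun i _ => ?_)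
    rw [htel (-((i : ℤ) + 1)), show -((i:ℤ)+1)+1 = -(i:ℤ) by ring]
  have hsum2 : HasSum (fun n : ℕ => t (-((n : ℤ) + 1))) (Ψ 0 - (-(2*S*P) - S^2 + 2*ω)) := by
    rw [hasSum_iff_tendsto_nat_of_nonneg (fun i => ht0 _)]
    have := (tendsto_const_nhds : Filter.Tendsto (fun _ : ℕ => Ψ 0) _ _).sub hΨminus
    exact this.congr (fun N => (hpartial2 N).symm)
  have hsumt : HasSum t (((2*S*P - S^2 - 2*ω) - Ψ 0) + (Ψ 0 - (-(2*S*P) - S^2 + 2*ω))) :=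
    HasSum.of_nat_of_neg_add_one hsum1 hsum2
  have hsummt : Summable t := hsumt.summable
  -- summability of the pieces
  have haterm0 : ∀ n : ℤ, 0 ≤ a1 n ^ 2 - 1 - Real.log (a1 n ^ 2) := by
    intro n
    have h1 : Real.log (a1 n ^ 2) ≤ a1 n ^ 2 - 1 := Real.log_le_sub_one_of_pos (ha2pos n)
    linarith
  have hsumb : Summable (fun n : ℤ => b1 n ^ 2) := by
    apply Summable.of_nonneg_of_le (fun n => sq_nonneg _) _ hsummt
    intro n
    simp only [ht]
    have := haterm0 n
    linarith
  have hsuma : Summable (fun n : ℤ => a1 n ^ 2 - 1 - Real.log (a1 n ^ 2)) := by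
    apply Summable.of_nonneg_of_le haterm0 _ (hsummt.mul_left (1/2 : ℝ))
    intro n
    simp only [ht]
    have := sq_nonneg (b1 n)
    linarith
  refine ⟨hsumb, hsuma, ?_⟩
  have htsum : ∑' n : ℤ, t n = (∑' n : ℤ, b1 n ^ 2) + 2 * ∑' n : ℤ, (a1 n ^ 2 - 1 - Real.log (a1 n ^ 2)) := by
    simp only [ht]
    rw [Summable.tsum_add hsumb (hsuma.mul_left 2), tsum_mul_left]
  rw [← htsum, hsumt.tsum_eq]
  have hfinal : 4 * (S * P) = Real.exp (2*ω) - Real.exp (-(2*ω)) := by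
    rw [hS, hP, Real.sinh_eq, Real.cosh_eq, show (2:ℝ)*ω = ω + ω by ring, Real.exp_add,
      Real.exp_neg, Real.exp_neg, Real.exp_add]
    have := Real.exp_pos ω
    field_simp
    ring
  linarith [hfinal]
end
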